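/- For every integer n ≥ 1 and every integer k with 1 ≤ k ≤ n: (n−k)/n + 1/(1−(1−1/k)^n) ≤ 2 − 1/n, with equality when k = 1. Consequently max_{k ∈ {1,…,n}} ( (n−k)/n + 1/(1−(1−1/k)^n) ) = 2 − 1/n. -/

import Mathlib

/-- Lemma 5: for `1 ≤ k ≤ n`, `(n - k)/n + 1/(1 - (1 - 1/k)^n) ≤ 2 - 1/n`,
with equality at `k = 1`; hence the maximum over `k` equals `2 - 1/n`. -/
theorem stmt_7 (n : ℕ) (hn : 1 ≤ n) :
    (∀ k : ℕ, 1 ≤ k → k ≤ n →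
        ((n : ℝ) - (k : ℝ)) / (n : ℝ) + 1 / (1 - (1 - 1 / (k : ℝ)) ^ n)
          ≤ 2 - 1 / (n : ℝ)) ∧
    ((n : ℝ) - (1 : ℝ)) / (n : ℝ) + 1 / (1 - (1 - 1 / (1 : ℝ)) ^ n)
      = 2 - 1 / (n : ℝ) := by
  have hn' : (1:ℝ) ≤ n := by exact_mod_cast hn
  have hn0 : (0:ℝ) < n := by linarith
  have hz : ((1:ℝ) - 1/1)^n = 0 := by
    simp [zero_pow (by omega : n ≠ 0)]
  have heq : ((n : ℝ) - 1) / n + 1 / (1 - (1 - 1/(1:ℝ))^n) = 2 - 1/n := by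
    rw [hz]
    field_simp
    ring
  refine ⟨?_, heq⟩
  intro k hk1 hkn
  rcases Nat.lt_or_ge k 2 with h | h
  · have hk : k = 1 := by omega
    subst hk
    simp only [Nat.cast_one]
    exact heq.le
  · have hk2 : (2:ℝ) ≤ (k:ℝ) := by exact_mod_cast h
    set kr := (k:ℝ) with hkr
    have hkm : (0:ℝ) < kr - 1 := by linarith
    have hkr0 : (0:ℝ) < kr := by linarith
    have ha : (0:ℝ) ≤ 1/(kr-1) := by positivity
    have hbern : 1 + (n:ℝ) * (1/(kr-1)) ≤ (1 + 1/(kr-1))^n :=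
      one_add_mul_le_pow (by linarith) n
    have hpowpos : (0:ℝ) < (1 + 1/(kr-1))^n := by positivity
    have hmul : (1 - 1/kr) * (1 + 1/(kr-1)) = 1 := by field_simp; ring
    have h2 : (1 - 1/kr)^n = 1/(1 + 1/(kr-1))^n := by
      rw [eq_div_iff hpowpos.ne', ← mul_pow, hmul, one_pow]
    have hbpos : (0:ℝ) < 1 + (n:ℝ) * (1/(kr-1)) := by positivity
    have h3 : 1/(1+1/(kr-1))^n ≤ 1/(1 + (n:ℝ)*(1/(kr-1))) :=
      one_div_le_one_div_of_le hbpos hbern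
    have h4 : 1/(1 + (n:ℝ)*(1/(kr-1))) = (kr-1)/(kr-1+n) := by
      rw [div_eq_div_iff hbpos.ne' (by positivity : (kr-1+(n:ℝ)) ≠ 0)]
      field_simp
    have hb : (1 - 1/kr)^n ≤ (kr - 1)/(kr - 1 + n) := by
      rw [h2, ← h4]; exact h3
    have hsum : (kr-1)/(kr-1+n) + (n:ℝ)/(kr-1+n) = 1 := by
      field_simp
    have hd : (n:ℝ)/(kr-1+n) ≤ 1 - (1-1/kr)^n := by linarith
    have h5 : 1/(1 - (1-1/kr)^n) ≤ (kr-1+n)/n := by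
      have := one_div_le_one_div_of_le (by positivity : (0:ℝ) < (n:ℝ)/(kr-1+n)) hd
      rwa [one_div_div] at this
    have hfin : ((n:ℝ) - kr)/n + (kr-1+n)/n = 2 - 1/n := by
      field_simp
      ring
    linarith
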